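/- Let (u, v, pu, pv) solve the FLRW null geodesic system on an interval I with angular momentum L ≥ 0. Then (t·(pv − pu))' = L²/(t·r³) ≥ 0 on I. If moreover the mass shell relation 4t²r²·pu·pv = L² holds on I, then (t·pv)' = L²/(2·t·r³) ≥ 0 and (t·pu)' = −L²/(2·t·r³) ≤ 0 on I. -/

import Mathlib

/-- The time coordinate `t = (v+u)²/4` along a curve in double null coordinates. -/
noncomputable def tOf (u v : ℝ → ℝ) (s : ℝ) : ℝ := (v s + u s) ^ 2 / 4

/-- The radial coordinate `r = v − u` along a curve in double null coordinates. -/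
noncomputable def rOf (u v : ℝ → ℝ) (s : ℝ) : ℝ := v s - u s

/-- **The FLRW null geodesic system** with angular momentum `L` on a set `I ⊆ ℝ`:
`u' = pu`, `v' = pv`,
`pu' = −t^{−1/2}·pu² − (1/2)(1/(2t^{1/2}) + 1/r)·L²/(t²r²)`,
`pv' = −t^{−1/2}·pv² − (1/2)(1/(2t^{1/2}) − 1/r)·L²/(t²r²)`,
where `t = (v+u)²/4` and `r = v−u` are required to satisfy `v+u > 0`, `r > 0` on `I`,
and `pu ≥ 0`, `pv ≥ 0` on `I`. -/
def FLRWGeodesicSystem (I : Set ℝ) (L : ℝ) (u v pu pv : ℝ → ℝ) : Prop :=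
  (∀ s ∈ I, 0 < v s + u s) ∧
  (∀ s ∈ I, 0 < rOf u v s) ∧
  (∀ s ∈ I, 0 ≤ pu s) ∧
  (∀ s ∈ I, 0 ≤ pv s) ∧
  (∀ s ∈ I, HasDerivAt u (pu s) s) ∧
  (∀ s ∈ I, HasDerivAt v (pv s) s) ∧
  (∀ s ∈ I, HasDerivAt pu
    (-(pu s) ^ 2 / Real.sqrt (tOf u v s)
      - 1 / 2 * (1 / (2 * Real.sqrt (tOf u v s)) + 1 / rOf u v s) * L ^ 2
          / ((tOf u v s) ^ 2 * (rOf u v s) ^ 2)) s) ∧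
  (∀ s ∈ I, HasDerivAt pv
    (-(pv s) ^ 2 / Real.sqrt (tOf u v s)
      - 1 / 2 * (1 / (2 * Real.sqrt (tOf u v s)) - 1 / rOf u v s) * L ^ 2
          / ((tOf u v s) ^ 2 * (rOf u v s) ^ 2)) s)

/-- **Monotonicity of the renormalised momenta along FLRW null geodesics.**
If `(u,v,pu,pv)` solves the FLRW null geodesic system on an interval `I` with angular
momentum `L ≥ 0`, then `(t·(pv − pu))' = L²/(t·r³) ≥ 0` on `I`.  If moreover the mass
shell relation `4t²r²·pu·pv = L²` holds on `I`, then `(t·pv)' = L²/(2t·r³) ≥ 0` and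
`(t·pu)' = −L²/(2t·r³) ≤ 0` on `I`. -/
theorem flrw_geodesic_momentum_monotonicity (I : Set ℝ) (hI : Convex ℝ I)
    (L : ℝ) (hL : 0 ≤ L) (u v pu pv : ℝ → ℝ)
    (hsys : FLRWGeodesicSystem I L u v pu pv) :
    (∀ s ∈ I,
      HasDerivAt (fun s' => tOf u v s' * (pv s' - pu s'))
        (L ^ 2 / (tOf u v s * (rOf u v s) ^ 3)) s ∧
      0 ≤ L ^ 2 / (tOf u v s * (rOf u v s) ^ 3)) ∧
    ((∀ s ∈ I, 4 * (tOf u v s) ^ 2 * (rOf u v s) ^ 2 * pu s * pv s = L ^ 2) →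
      ∀ s ∈ I,
        HasDerivAt (fun s' => tOf u v s' * pv s')
          (L ^ 2 / (2 * tOf u v s * (rOf u v s) ^ 3)) s ∧
        0 ≤ L ^ 2 / (2 * tOf u v s * (rOf u v s) ^ 3) ∧
        HasDerivAt (fun s' => tOf u v s' * pu s')
          (-(L ^ 2 / (2 * tOf u v s * (rOf u v s) ^ 3))) s ∧
        -(L ^ 2 / (2 * tOf u v s * (rOf u v s) ^ 3)) ≤ 0) := by
  obtain ⟨h1, h2, h3, h4, hu, hv, hpu, hpv⟩ := hsys
  have key : ∀ s ∈ I,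
      Real.sqrt (tOf u v s) = (v s + u s) / 2 ∧
      HasDerivAt (tOf u v) ((v s + u s) / 2 * (pv s + pu s)) s := by
    intro s hs
    have ha := h1 s hs
    have hsq : Real.sqrt (tOf u v s) = (v s + u s) / 2 := by
      rw [show tOf u v s = ((v s + u s) / 2) ^ 2 by simp only [tOf]; ring]
      exact Real.sqrt_sq (by linarith)
    refine ⟨hsq, ?_⟩
    have h := (((hv s hs).add (hu s hs)).pow 2).div_const 4
    refine h.congr_deriv ?_
    symm
    simp only [Pi.add_apply]
    push_cast
    ring
  constructor
  · intro s hs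
    have ha := h1 s hs
    have hr := h2 s hs
    have ht : (0:ℝ) < tOf u v s := by simp only [tOf]; positivity
    obtain ⟨hsq, htof⟩ := key s hs
    have hpos : 0 ≤ L ^ 2 / (tOf u v s * (rOf u v s) ^ 3) := by positivity
    refine ⟨?_, hpos⟩
    have hd := htof.mul ((hpv s hs).sub (hpu s hs))
    refine hd.congr_deriv ?_
    symm
    simp only [Pi.sub_apply]
    rw [hsq]
    simp only [tOf, rOf] at *
    have ha' : v s + u s ≠ 0 := ne_of_gt ha
    have hr' : v s - u s ≠ 0 := ne_of_gt hr
    field_simp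
    ring
  · intro hms s hs
    have ha := h1 s hs
    have hr := h2 s hs
    have ht : (0:ℝ) < tOf u v s := by simp only [tOf]; positivity
    obtain ⟨hsq, htof⟩ := key s hs
    have ha' : v s + u s ≠ 0 := ne_of_gt ha
    have hr' : rOf u v s ≠ 0 := ne_of_gt hr
    have hmss := hms s hs
    simp only [tOf, rOf] at hmss
    have hpos : 0 ≤ L ^ 2 / (2 * tOf u v s * (rOf u v s) ^ 3) := by positivity
    refine ⟨?_, hpos, ?_, by linarith⟩
    · have hd := htof.mul (hpv s hs)
      refine hd.congr_deriv ?_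
      symm
      rw [hsq]
      simp only [tOf, rOf] at *
      field_simp
      linear_combination (-16 * (v s - u s)) * hmss
    · have hd := htof.mul (hpu s hs)
      refine hd.congr_deriv ?_
      symm
      rw [hsq]
      simp only [tOf, rOf] at *
      field_simp
      linear_combination (-16 * (v s - u s)) * hmss
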